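/- arXiv:1912.10765 — 6 statements merged into one kernel-verified Lean document; each statement's English description precedes it below -/
import Mathlib

section
/- Let A be an n×n complex matrix with 2×2 block structure. Then the quadratic numerical range W²(A) is contained in the numerical range W(A). -/
open Matrix

noncomputable section

/-- The numerical range (field of values) of a complex matrix. -/
def numRange {ι : Type*} [Fintype ι] (A : Matrix ι ι ℂ) : Set ℂ :=
  {z | ∃ x : ι → ℂ, star x ⬝ᵥ x = 1 ∧ z = star x ⬝ᵥ A.mulVec x}

/-- The quadratic numerical range of a 2×2 block matrix, given by its blocks. -/
def quadRange {n1 n2 : ℕ} (A11 : Matrix (Fin n1) (Fin n1) ℂ)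
    (A12 : Matrix (Fin n1) (Fin n2) ℂ) (A21 : Matrix (Fin n2) (Fin n1) ℂ)
    (A22 : Matrix (Fin n2) (Fin n2) ℂ) : Set ℂ :=
  {z | ∃ x1 : Fin n1 → ℂ, ∃ x2 : Fin n2 → ℂ,
    star x1 ⬝ᵥ x1 = 1 ∧ star x2 ⬝ᵥ x2 = 1 ∧
    z ∈ spectrum ℂ (!![star x1 ⬝ᵥ A11.mulVec x1, star x1 ⬝ᵥ A12.mulVec x2;
                       star x2 ⬝ᵥ A21.mulVec x1, star x2 ⬝ᵥ A22.mulVec x2])}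

/-- The quadratic numerical range is contained in the numerical range. -/
theorem stmt2 {n1 n2 : ℕ} (A11 : Matrix (Fin n1) (Fin n1) ℂ)
    (A12 : Matrix (Fin n1) (Fin n2) ℂ) (A21 : Matrix (Fin n2) (Fin n1) ℂ)
    (A22 : Matrix (Fin n2) (Fin n2) ℂ) :
    quadRange A11 A12 A21 A22 ⊆ numRange (Matrix.fromBlocks A11 A12 A21 A22) := by
  rintro z ⟨x1, x2, hx1, hx2, hz⟩
  set a := star x1 ⬝ᵥ A11.mulVec x1 with ha
  set b := star x1 ⬝ᵥ A12.mulVec x2 with hb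
  set c := star x2 ⬝ᵥ A21.mulVec x1 with hc
  set d := star x2 ⬝ᵥ A22.mulVec x2 with hd
  -- get eigenvector
  rw [← AlgEquiv.spectrum_eq (Matrix.toLinAlgEquiv <| Pi.basisFun ℂ (Fin 2)),
    ← Module.End.hasEigenvalue_iff_mem_spectrum] at hz
  obtain ⟨v, hv⟩ := hz.exists_hasEigenvector
  have hv0 : v ≠ 0 := hv.right
  have hML : Matrix.toLinAlgEquiv (Pi.basisFun ℂ (Fin 2)) !![a, b; c, d] = Matrix.toLin' !![a, b; c, d] := rfl
  have hmul : (!![a, b; c, d]).mulVec v = z • v := by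
    have := hv.apply_eq_smul
    rwa [hML, Matrix.toLin'_apply] at this
  have h1 : a * v 0 + b * v 1 = z * v 0 := by
    have := congrFun hmul 0
    simpa [Matrix.mulVec, dotProduct, Fin.sum_univ_two] using this
  have h2 : c * v 0 + d * v 1 = z * v 1 := by
    have := congrFun hmul 1
    simpa [Matrix.mulVec, dotProduct, Fin.sum_univ_two] using this
  -- normalize
  set s : ℝ := Complex.normSq (v 0) + Complex.normSq (v 1) with hs
  have hspos : 0 < s := by
    rcases (by simpa [funext_iff, Fin.forall_fin_two] using hv0 :
        ¬ (v 0 = 0 ∧ v 1 = 0)) with h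
    have h0 := Complex.normSq_nonneg (v 0)
    have h1' := Complex.normSq_nonneg (v 1)
    rw [hs]
    rcases eq_or_ne (v 0) 0 with h0' | h0'
    · have := Complex.normSq_pos.2 (fun h1'' => h ⟨h0', h1''⟩ : v 1 ≠ 0)
      linarith
    · have := Complex.normSq_pos.2 h0'
      linarith
  set t : ℂ := ((Real.sqrt s : ℝ) : ℂ)⁻¹ with ht
  have htt : (starRingEnd ℂ) t * t = (s⁻¹ : ℝ) := by
    simp only [ht, map_inv₀, Complex.conj_ofReal, ← mul_inv, ← Complex.ofReal_mul,
      Real.mul_self_sqrt hspos.le, Complex.ofReal_inv]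
  set α := t * v 0 with hα
  set β := t * v 1 with hβ
  have key : (starRingEnd ℂ) α * α + (starRingEnd ℂ) β * β = 1 := by
    rw [hα, hβ]
    have : (starRingEnd ℂ) (v 0) * v 0 + (starRingEnd ℂ) (v 1) * v 1 = (s : ℂ) := by
      rw [hs]
      push_cast [← Complex.normSq_eq_conj_mul_self]
      ring
    calc (starRingEnd ℂ) (t * v 0) * (t * v 0) + (starRingEnd ℂ) (t * v 1) * (t * v 1)
        = ((starRingEnd ℂ) t * t) * ((starRingEnd ℂ) (v 0) * v 0 + (starRingEnd ℂ) (v 1) * v 1) := by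
          rw [_root_.map_mul, _root_.map_mul]; ring
      _ = ((s⁻¹ : ℝ) : ℂ) * (s : ℂ) := by rw [htt, this]
      _ = 1 := by
          rw [← Complex.ofReal_mul, inv_mul_cancel₀ hspos.ne']
          simp
  refine ⟨Sum.elim (α • x1) (β • x2), ?_, ?_⟩
  · rw [Function.star_sumElim, sumElim_dotProduct_sumElim,
      star_smul, smul_dotProduct, dotProduct_smul,
      star_smul, smul_dotProduct, dotProduct_smul, hx1, hx2]
    simpa [smul_eq_mul] using key
  · rw [Function.star_sumElim, Matrix.fromBlocks_mulVec,
      sumElim_dotProduct_sumElim]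
    simp only [Sum.elim_comp_inl, Sum.elim_comp_inr]
    have e1 : star (α • x1) ⬝ᵥ (A11.mulVec (α • x1) + A12.mulVec (β • x2))
        = (starRingEnd ℂ) α * α * a + (starRingEnd ℂ) α * β * b := by
      rw [dotProduct_add, star_smul, Matrix.mulVec_smul, Matrix.mulVec_smul,
        smul_dotProduct, smul_dotProduct, dotProduct_smul,
        dotProduct_smul, ← ha, ← hb]
      simp [smul_eq_mul]; ring
    have e2 : star (β • x2) ⬝ᵥ (A21.mulVec (α • x1) + A22.mulVec (β • x2))
        = (starRingEnd ℂ) β * α * c + (starRingEnd ℂ) β * β * d := by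
      rw [dotProduct_add, star_smul, Matrix.mulVec_smul, Matrix.mulVec_smul,
        smul_dotProduct, smul_dotProduct, dotProduct_smul,
        dotProduct_smul, ← hc, ← hd]
      simp [smul_eq_mul]; ring
    rw [e1, e2]
    have hαβ1 : a * α + b * β = z * α := by
      rw [hα, hβ]; rw [show a * (t * v 0) + b * (t * v 1) = t * (a * v 0 + b * v 1) by ring, h1]; ring
    have hαβ2 : c * α + d * β = z * β := by
      rw [hα, hβ]; rw [show c * (t * v 0) + d * (t * v 1) = t * (c * v 0 + d * v 1) by ring, h2]; ring
    calc z = z * ((starRingEnd ℂ) α * α + (starRingEnd ℂ) β * β) := by rw [key]; ring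
      _ = (starRingEnd ℂ) α * (a * α + b * β) + (starRingEnd ℂ) β * (c * α + d * β) := by
          rw [hαβ1, hαβ2]; ring
      _ = _ := by ring
end
end

section
/- Let A be an n×n complex matrix with 2×2 block structure with block sizes n1, n2 ≥ 2. Then the numerical ranges of the diagonal blocks satisfy W(A11) ⊆ W²(A) and W(A22) ⊆ W²(A). -/
open Matrix

noncomputable section

lemma exists_unit_orth {n : ℕ} (hn : 2 ≤ n) (v : Fin n → ℂ) :
    ∃ x : Fin n → ℂ, star x ⬝ᵥ x = 1 ∧ star x ⬝ᵥ v = 0 := by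
  set E := EuclideanSpace ℂ (Fin n)
  let v' : E := (WithLp.equiv 2 _).symm v
  have hd : 0 < Module.finrank ℂ (ℂ ∙ v')ᗮ := by
    have h := Submodule.finrank_add_finrank_orthogonal (K := ℂ ∙ v')
    have h1 : Module.finrank ℂ (ℂ ∙ v') ≤ 1 := by
      by_cases hv : v' = 0
      · rw [hv, Submodule.span_zero_singleton]; simp
      · simp [finrank_span_singleton hv]
    have h2 : Module.finrank ℂ E = n := by simp [E]
    omega
  have hbot : (ℂ ∙ v')ᗮ ≠ ⊥ := by
    intro h; rw [h] at hd; simp at hd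
  obtain ⟨w, hw, hw0⟩ := Submodule.exists_mem_ne_zero_of_ne_bot hbot
  refine ⟨(‖w‖ : ℂ)⁻¹ • (WithLp.equiv 2 _ w), ?_, ?_⟩
  · have hwv : star (WithLp.equiv 2 _ w : Fin n → ℂ) ⬝ᵥ (WithLp.equiv 2 _ w) = (‖w‖ : ℂ)^2 := by
      rw [dotProduct_comm]; simp only [WithLp.equiv_apply]
      rw [← EuclideanSpace.inner_eq_star_dotProduct]
      exact_mod_cast inner_self_eq_norm_sq_to_K (𝕜 := ℂ) w
    have hnw : (‖w‖ : ℂ) ≠ 0 := by exact_mod_cast norm_ne_zero_iff.mpr hw0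
    rw [star_smul, smul_dotProduct, dotProduct_smul, hwv]
    simp only [star_inv₀, Complex.star_def, Complex.conj_ofReal, smul_eq_mul]
    field_simp
  · have hwv : star (WithLp.equiv 2 _ w : Fin n → ℂ) ⬝ᵥ v = 0 := by
      rw [show v = WithLp.equiv 2 _ v' from rfl, dotProduct_comm]; simp only [WithLp.equiv_apply]
      rw [← EuclideanSpace.inner_eq_star_dotProduct]
      exact inner_eq_zero_symm.mp ((Submodule.mem_orthogonal (ℂ ∙ v') w).mp hw v'
        (Submodule.mem_span_singleton_self v'))
    rw [star_smul, smul_dotProduct, hwv, smul_zero]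

lemma mem_spec_upper (z b d : ℂ) : z ∈ spectrum ℂ !![z, b; (0:ℂ), d] := by
  rw [spectrum.mem_iff]
  intro h
  rw [Matrix.isUnit_iff_isUnit_det, Matrix.det_fin_two] at h
  simp [Matrix.algebraMap_matrix_apply] at h

lemma mem_spec_lower (a c z : ℂ) : z ∈ spectrum ℂ !![a, (0:ℂ); c, z] := by
  rw [spectrum.mem_iff]
  intro h
  rw [Matrix.isUnit_iff_isUnit_det, Matrix.det_fin_two] at h
  simp [Matrix.algebraMap_matrix_apply] at h

/-- For block sizes at least 2, the numerical ranges of the diagonal blocks are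
contained in the quadratic numerical range. -/
theorem stmt3 {n1 n2 : ℕ} (hn1 : 2 ≤ n1) (hn2 : 2 ≤ n2)
    (A11 : Matrix (Fin n1) (Fin n1) ℂ) (A12 : Matrix (Fin n1) (Fin n2) ℂ)
    (A21 : Matrix (Fin n2) (Fin n1) ℂ) (A22 : Matrix (Fin n2) (Fin n2) ℂ) :
    numRange A11 ⊆ quadRange A11 A12 A21 A22 ∧
    numRange A22 ⊆ quadRange A11 A12 A21 A22 := by
  constructor
  · rintro z ⟨x1, hx1, rfl⟩
    obtain ⟨x2, hx2, horth⟩ := exists_unit_orth hn2 (A21.mulVec x1)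
    refine ⟨x1, x2, hx1, hx2, ?_⟩
    rw [horth]
    exact mem_spec_upper _ _ _
  · rintro z ⟨x2, hx2, rfl⟩
    obtain ⟨x1, hx1, horth⟩ := exists_unit_orth hn1 (A12.mulVec x2)
    refine ⟨x1, x2, hx1, hx2, ?_⟩
    rw [horth]
    exact mem_spec_lower _ _ _
end
end

section
/- Let A be a nonsingular n×n complex matrix with 2×2 block structure and suppose 0 ∉ W²(A). Let V1 ∈ ℂ^{n1×m1} and V2 ∈ ℂ^{n2×m2} have orthonormal columns and V = diag(V1,V2). Then the projected matrix H = V*AV is nonsingular. -/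
open Matrix

noncomputable section


/-- adjoint moves across the dot product -/
lemma adj_dot {p q : ℕ} (V : Matrix (Fin p) (Fin q) ℂ) (a : Fin q → ℂ) (w : Fin p → ℂ) :
    star (V *ᵥ a) ⬝ᵥ w = star a ⬝ᵥ Vᴴ *ᵥ w := by
  rw [Matrix.star_mulVec, Matrix.dotProduct_mulVec]

lemma dot_self_real {k : ℕ} (y : Fin k → ℂ) :
    star y ⬝ᵥ y = ((∑ i, Complex.normSq (y i) : ℝ) : ℂ) := by
  simp [dotProduct, Complex.normSq_eq_conj_mul_self]

/-- normalization claim -/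
lemma normalize_claim {p q : ℕ} (hq : 0 < q) (V : Matrix (Fin p) (Fin q) ℂ)
    (hV : Vᴴ * V = 1) (y : Fin q → ℂ) :
    ∃ (u : Fin q → ℂ) (c : ℝ), star (V *ᵥ u) ⬝ᵥ (V *ᵥ u) = 1 ∧
      (c : ℂ) • (V *ᵥ u) = V *ᵥ y ∧ (y ≠ 0 → c ≠ 0) := by
  have key : ∀ z : Fin q → ℂ, star (V *ᵥ z) ⬝ᵥ (V *ᵥ z) = star z ⬝ᵥ z := by
    intro z
    rw [adj_dot, Matrix.mulVec_mulVec, hV, Matrix.one_mulVec]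
  by_cases hy : y = 0
  · refine ⟨Pi.single ⟨0, hq⟩ 1, 0, ?_, ?_, fun h => absurd hy h⟩
    · rw [key]
      simp [dotProduct, Pi.single_apply, Finset.sum_ite_eq']
    · simp [hy]
  · set r : ℝ := ∑ i, Complex.normSq (y i) with hr
    have hrpos : 0 < r := by
      rcases Function.ne_iff.mp hy with ⟨i, hi⟩
      have : 0 < Complex.normSq (y i) := Complex.normSq_pos.mpr hi
      exact Finset.sum_pos' (fun j _ => Complex.normSq_nonneg _)
        ⟨i, Finset.mem_univ i, this⟩
    set c : ℝ := Real.sqrt r with hc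
    have hcpos : 0 < c := Real.sqrt_pos.mpr hrpos
    have hcne : (c : ℂ) ≠ 0 := by exact_mod_cast hcpos.ne'
    refine ⟨(c : ℂ)⁻¹ • y, c, ?_, ?_, fun _ => hcpos.ne'⟩
    · rw [key]
      have : star ((c:ℂ)⁻¹ • y) ⬝ᵥ ((c:ℂ)⁻¹ • y)
          = (starRingEnd ℂ) (c:ℂ)⁻¹ * ((c:ℂ)⁻¹ * (star y ⬝ᵥ y)) := by
        rw [star_smul, smul_dotProduct, dotProduct_smul, smul_eq_mul,
          smul_eq_mul, star_inv₀]
        rw [← starRingEnd_apply, map_inv₀]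
      rw [this, dot_self_real, ← hr]
      have : r = (c : ℝ)^2 := (Real.sq_sqrt hrpos.le).symm
      rw [this]
      have hcc : (starRingEnd ℂ) (c:ℂ)⁻¹ = (c:ℂ)⁻¹ := by
        simp
      rw [hcc]
      push_cast
      field_simp
    · rw [Matrix.mulVec_smul, smul_smul, mul_inv_cancel₀ hcne, one_smul]

lemma row_zero {p q r1 r2 s1 s2 : ℕ}
    (V : Matrix (Fin p) (Fin q) ℂ) (u : Fin q → ℂ)
    (B1 : Matrix (Fin p) (Fin r1) ℂ) (W1 : Matrix (Fin r1) (Fin s1) ℂ)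
    (B2 : Matrix (Fin p) (Fin r2) ℂ) (W2 : Matrix (Fin r2) (Fin s2) ℂ)
    (x1 : Fin r1 → ℂ) (x2 : Fin r2 → ℂ) (y1 : Fin s1 → ℂ) (y2 : Fin s2 → ℂ)
    (c1 c2 : ℝ) (hx1 : (c1 : ℂ) • x1 = W1 *ᵥ y1) (hx2 : (c2 : ℂ) • x2 = W2 *ᵥ y2)
    (hrow : (Vᴴ * B1 * W1) *ᵥ y1 + (Vᴴ * B2 * W2) *ᵥ y2 = 0) :
    (star (V *ᵥ u) ⬝ᵥ B1 *ᵥ x1) * (c1 : ℂ) + (star (V *ᵥ u) ⬝ᵥ B2 *ᵥ x2) * (c2 : ℂ) = 0 := by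
  have e1 : (star (V *ᵥ u) ⬝ᵥ B1 *ᵥ x1) * (c1 : ℂ)
      = star u ⬝ᵥ (Vᴴ * B1 * W1) *ᵥ y1 := by
    rw [mul_comm, ← smul_eq_mul, ← dotProduct_smul, ← Matrix.mulVec_smul, hx1,
      adj_dot, Matrix.mulVec_mulVec, Matrix.mulVec_mulVec]
  have e2 : (star (V *ᵥ u) ⬝ᵥ B2 *ᵥ x2) * (c2 : ℂ)
      = star u ⬝ᵥ (Vᴴ * B2 * W2) *ᵥ y2 := by
    rw [mul_comm, ← smul_eq_mul, ← dotProduct_smul, ← Matrix.mulVec_smul, hx2,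
      adj_dot, Matrix.mulVec_mulVec, Matrix.mulVec_mulVec]
  rw [e1, e2, ← dotProduct_add, hrow, dotProduct_zero]

/-- If `A` is nonsingular and `0 ∉ W²(A)`, then the block-diagonal orthonormal
compression `H = V*AV` is nonsingular. -/
theorem stmt5 {n1 n2 m1 m2 : ℕ} (hm1 : 0 < m1) (hm2 : 0 < m2)
    (hm1n : m1 ≤ n1) (hm2n : m2 ≤ n2)
    (A11 : Matrix (Fin n1) (Fin n1) ℂ) (A12 : Matrix (Fin n1) (Fin n2) ℂ)
    (A21 : Matrix (Fin n2) (Fin n1) ℂ) (A22 : Matrix (Fin n2) (Fin n2) ℂ)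
    (hA : IsUnit (Matrix.fromBlocks A11 A12 A21 A22))
    (h0 : (0 : ℂ) ∉ quadRange A11 A12 A21 A22)
    (V1 : Matrix (Fin n1) (Fin m1) ℂ) (V2 : Matrix (Fin n2) (Fin m2) ℂ)
    (hV1 : V1ᴴ * V1 = 1) (hV2 : V2ᴴ * V2 = 1) :
    IsUnit (Matrix.fromBlocks (V1ᴴ * A11 * V1) (V1ᴴ * A12 * V2)
      (V2ᴴ * A21 * V1) (V2ᴴ * A22 * V2)) := by
  by_contra hH
  rw [Matrix.isUnit_iff_isUnit_det, isUnit_iff_ne_zero, not_not] at hH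
  obtain ⟨v, hv, hvz⟩ := Matrix.exists_mulVec_eq_zero_iff.mpr hH
  rw [Matrix.fromBlocks_mulVec] at hvz
  have h1 : (V1ᴴ * A11 * V1) *ᵥ (v ∘ Sum.inl) + (V1ᴴ * A12 * V2) *ᵥ (v ∘ Sum.inr) = 0 :=
    funext fun i => congrFun hvz (Sum.inl i)
  have h2 : (V2ᴴ * A21 * V1) *ᵥ (v ∘ Sum.inl) + (V2ᴴ * A22 * V2) *ᵥ (v ∘ Sum.inr) = 0 :=
    funext fun i => congrFun hvz (Sum.inr i)
  obtain ⟨u1, c1, hx1u, hcx1, hc1⟩ := normalize_claim hm1 V1 hV1 (v ∘ Sum.inl)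
  obtain ⟨u2, c2, hx2u, hcx2, hc2⟩ := normalize_claim hm2 V2 hV2 (v ∘ Sum.inr)
  apply h0
  refine ⟨V1 *ᵥ u1, V2 *ᵥ u2, hx1u, hx2u, ?_⟩
  rw [spectrum.zero_mem_iff, Matrix.isUnit_iff_isUnit_det, isUnit_iff_ne_zero, not_not,
    ← Matrix.exists_mulVec_eq_zero_iff]
  refine ⟨![(c1 : ℂ), (c2 : ℂ)], ?_, ?_⟩
  · intro h
    have hc10 : c1 = 0 := by have := congrFun h 0; simpa using this
    have hc20 : c2 = 0 := by have := congrFun h 1; simpa using this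
    have hy1 : v ∘ Sum.inl = 0 := by
      by_contra hy; exact hc1 hy hc10
    have hy2 : v ∘ Sum.inr = 0 := by
      by_contra hy; exact hc2 hy hc20
    apply hv
    funext i
    cases i with
    | inl i => exact congrFun hy1 i
    | inr i => exact congrFun hy2 i
  · funext i
    fin_cases i
    · simp only [dotProduct, Fin.sum_univ_two, Fin.isValue, Matrix.cons_val',
        Matrix.cons_val_zero, Matrix.empty_val', Matrix.cons_val_fin_one,
        Matrix.cons_val_one, Matrix.head_cons, Matrix.head_fin_const, Pi.zero_apply,
        Matrix.of_apply, Matrix.mulVec]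
      exact row_zero V1 u1 A11 V1 A12 V2 _ _ _ _ c1 c2 hcx1 hcx2 h1
    · simp only [dotProduct, Fin.sum_univ_two, Fin.isValue, Matrix.cons_val',
        Matrix.cons_val_zero, Matrix.empty_val', Matrix.cons_val_fin_one,
        Matrix.cons_val_one, Matrix.head_cons, Matrix.head_fin_const, Pi.zero_apply,
        Matrix.of_apply, Matrix.mulVec]
      exact row_zero V2 u2 A21 V1 A22 V2 _ _ _ _ c1 c2 hcx1 hcx2 h2
end
end

section
/- Let A = [[A11,A12],[A21,A22]] be an n×n complex block matrix with block sizes n1, n2 ≥ 2. If the quadratic numerical range W²(A) equals the two-point set {λ1, λ2}, then (up to swapping λ1 and λ2) A11 = λ1·I, A22 = λ2·I, and at least one of A12, A21 is the zero matrix. -/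
open Matrix

noncomputable section

/-! ### Auxiliary lemmas -/

lemma stmt7_spec_fin_two (a b c d z : ℂ) :
    z ∈ spectrum ℂ !![a, b; c, d] ↔ (z - a) * (z - d) - b * c = 0 := by
  rw [spectrum.mem_iff]
  have h : algebraMap ℂ (Matrix (Fin 2) (Fin 2) ℂ) z - !![a, b; c, d]
      = !![z - a, -b; -c, z - d] := by
    rw [Matrix.algebraMap_eq_diagonal]
    ext i j
    fin_cases i <;> fin_cases j <;> simp [Matrix.diagonal]
  rw [h, Matrix.isUnit_iff_isUnit_det, Matrix.det_fin_two_of, isUnit_iff_ne_zero, not_not]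
  constructor <;> intro h' <;> [linear_combination h'; linear_combination h']

lemma stmt7_dot_self_real {n : ℕ} (x : Fin n → ℂ) :
    star x ⬝ᵥ x = ((∑ i, Complex.normSq (x i) : ℝ) : ℂ) := by
  simp [dotProduct, Complex.normSq_eq_conj_mul_self]

lemma stmt7_exists_norml {n : ℕ} {x : Fin n → ℂ} (hx : x ≠ 0) :
    ∃ c : ℂ, c ≠ 0 ∧ star (c • x) ⬝ᵥ (c • x) = 1 := by
  set r : ℝ := ∑ i, Complex.normSq (x i) with hr
  have hrpos : 0 < r := by
    obtain ⟨i, hi⟩ := Function.ne_iff.mp hx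
    exact Finset.sum_pos' (fun j _ => Complex.normSq_nonneg _)
      ⟨i, Finset.mem_univ i, by simpa using Complex.normSq_pos.mpr hi⟩
  have hs : Real.sqrt r ≠ 0 := by positivity
  refine ⟨(((Real.sqrt r)⁻¹ : ℝ) : ℂ), by exact_mod_cast inv_ne_zero hs, ?_⟩
  rw [star_smul, smul_dotProduct, dotProduct_smul, stmt7_dot_self_real x, ← hr,
    smul_eq_mul, smul_eq_mul]
  rw [show (star ((((Real.sqrt r)⁻¹ : ℝ)): ℂ) : ℂ) = (((Real.sqrt r)⁻¹ : ℝ) : ℂ) from by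
    rw [RCLike.star_def, Complex.conj_ofReal]]
  have : ((Real.sqrt r)⁻¹ * ((Real.sqrt r)⁻¹ * r) : ℝ) = 1 := by
    rw [← mul_assoc, ← mul_inv, Real.mul_self_sqrt hrpos.le]
    field_simp
  calc ((((Real.sqrt r)⁻¹ : ℝ)):ℂ) * (((((Real.sqrt r)⁻¹ : ℝ)):ℂ) * ((r:ℝ):ℂ))
      = (((Real.sqrt r)⁻¹ * ((Real.sqrt r)⁻¹ * r) : ℝ) : ℂ) := by push_cast; ring
    _ = 1 := by rw [this]; norm_num

lemma stmt7_single_unit {n : ℕ} (hn : 0 < n) (i : Fin n) :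
    star (Pi.single i (1:ℂ)) ⬝ᵥ (Pi.single i (1:ℂ)) = 1 := by
  simp [dotProduct, Pi.single_apply, apply_ite (starRingEnd ℂ)]

lemma stmt7_exists_unit_orth {n : ℕ} (hn : 2 ≤ n) (v : Fin n → ℂ) :
    ∃ u : Fin n → ℂ, star u ⬝ᵥ u = 1 ∧ star u ⬝ᵥ v = 0 := by
  have h0 : (0:ℕ) < n := by omega
  by_cases hv : v = 0
  · exact ⟨Pi.single ⟨0, h0⟩ 1, stmt7_single_unit h0 _, by simp [hv]⟩
  · obtain ⟨i, hi⟩ := Function.ne_iff.mp hv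
    have : ∃ j : Fin n, j ≠ i := by
      have : Nontrivial (Fin n) := Fin.nontrivial_iff_two_le.mpr hn
      exact exists_ne i
    obtain ⟨j, hj⟩ := this
    set w : Fin n → ℂ := Pi.single i (starRingEnd ℂ (v j)) + Pi.single j (-(starRingEnd ℂ (v i))) with hw
    have hworth : star w ⬝ᵥ v = 0 := by
      rw [hw]
      simp only [star_add, add_dotProduct]
      have h1 : ∀ (a : ℂ) (k : Fin n), star (Pi.single k a) ⬝ᵥ v = starRingEnd ℂ a * v k := by
        intro a k
        simp [dotProduct, Pi.single_apply, apply_ite (starRingEnd ℂ)]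
      rw [h1, h1]
      simp
      ring
    have hwne : w ≠ 0 := by
      intro h
      have := congrFun h j
      simp [hw, Pi.single_apply, hj, (by simpa [eq_comm] using hj : ¬ j = i)] at this
      exact hi (by simpa using congrArg (starRingEnd ℂ) this)
    obtain ⟨c, hc, hcu⟩ := stmt7_exists_norml hwne
    exact ⟨c • w, hcu, by rw [star_smul, smul_dotProduct, hworth, smul_zero]⟩

lemma stmt7_zero_of_quadform {n : ℕ} (B : Matrix (Fin n) (Fin n) ℂ)
    (h : ∀ x : Fin n → ℂ, star x ⬝ᵥ B.mulVec x = 0) : B = 0 := by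
  set g : (Fin n → ℂ) → (Fin n → ℂ) → ℂ := fun x y => star x ⬝ᵥ B.mulVec y with hg
  have hadd : ∀ x y : Fin n → ℂ, g x y + g y x = 0 := by
    intro x y
    have := h (x + y)
    simp only [hg, star_add, add_dotProduct, Matrix.mulVec_add, dotProduct_add] at this ⊢
    have hx := h x; have hy := h y
    linear_combination this - hx - hy
  have hsub : ∀ x y : Fin n → ℂ, g x y - g y x = 0 := by
    intro x y
    have := hadd x (Complex.I • y)
    have e1 : g x (Complex.I • y) = Complex.I * g x y := by
      simp [hg, Matrix.mulVec_smul, dotProduct_smul]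
    have e2 : g (Complex.I • y) x = -(Complex.I) * g y x := by
      simp [hg, star_smul, smul_dotProduct, Complex.star_def, Complex.conj_I]
    rw [e1, e2] at this
    have h2 : Complex.I * (g x y - g y x) = 0 := by linear_combination this
    rcases mul_eq_zero.mp h2 with h3 | h3
    · exact absurd h3 Complex.I_ne_zero
    · exact h3
  have hzero : ∀ x y : Fin n → ℂ, g x y = 0 := by
    intro x y
    have h1 := hadd x y
    have h2 := hsub x y
    linear_combination (h1 + h2) / 2
  ext i j
  have := hzero (Pi.single i 1) (Pi.single j 1)
  simp only [hg, Matrix.mulVec_single] at this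
  simpa [dotProduct, Pi.single_apply, apply_ite (starRingEnd ℂ)] using this

lemma stmt7_eq_smul_one_of_quadform {n : ℕ} (A : Matrix (Fin n) (Fin n) ℂ) (μ : ℂ)
    (h : ∀ x : Fin n → ℂ, star x ⬝ᵥ A.mulVec x = μ * (star x ⬝ᵥ x)) :
    A = μ • (1 : Matrix (Fin n) (Fin n) ℂ) := by
  have : A - μ • 1 = 0 := by
    apply stmt7_zero_of_quadform
    intro x
    rw [Matrix.sub_mulVec, Matrix.smul_mulVec, Matrix.one_mulVec, dotProduct_sub,
      dotProduct_smul, h x, smul_eq_mul, sub_self]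
  rw [sub_eq_zero] at this; exact this

lemma stmt7_unit_iff_norm {n : ℕ} (u : EuclideanSpace ℂ (Fin n)) :
    star (WithLp.equiv 2 (Fin n → ℂ) u) ⬝ᵥ (WithLp.equiv 2 (Fin n → ℂ) u) = 1 ↔ ‖u‖ = 1 := by
  rw [stmt7_dot_self_real, EuclideanSpace.norm_eq]
  have he : ∀ i, Complex.normSq ((WithLp.equiv 2 (Fin n → ℂ) u) i) = ‖u i‖ ^ 2 := by
    intro i
    rw [← Complex.sq_norm]
    rfl
  simp only [he]
  rw [show ((1:ℂ) = ((1:ℝ):ℂ)) from by norm_num, Complex.ofReal_inj]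
  exact Real.sqrt_eq_one.symm

lemma stmt7_quadform_continuous {n : ℕ} (A : Matrix (Fin n) (Fin n) ℂ) :
    Continuous (fun y : Fin n → ℂ => star y ⬝ᵥ A.mulVec y) := by
  have : (fun y : Fin n → ℂ => star y ⬝ᵥ A.mulVec y)
      = fun y => ∑ i, ∑ j, (starRingEnd ℂ) (y i) * (A i j * y j) := by
    funext y; simp [dotProduct, Matrix.mulVec, Finset.mul_sum]
  rw [this]
  apply continuous_finset_sum; intro i _
  apply continuous_finset_sum; intro j _
  exact (RCLike.continuous_conj.comp (continuous_apply i)).mul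
    (continuous_const.mul (continuous_apply j))

lemma stmt7_quadform_const {n : ℕ} (hn : 1 ≤ n) (A : Matrix (Fin n) (Fin n) ℂ) (l1 l2 : ℂ)
    (h : ∀ x : Fin n → ℂ, star x ⬝ᵥ x = 1 →
      star x ⬝ᵥ A.mulVec x = l1 ∨ star x ⬝ᵥ A.mulVec x = l2) :
    (∀ x : Fin n → ℂ, star x ⬝ᵥ x = 1 → star x ⬝ᵥ A.mulVec x = l1) ∨
    (∀ x : Fin n → ℂ, star x ⬝ᵥ x = 1 → star x ⬝ᵥ A.mulVec x = l2) := by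
  by_cases hll : l1 = l2
  · left; intro x hx; rcases h x hx with h' | h' <;> simp [h', hll]
  set E := EuclideanSpace ℂ (Fin n)
  have hrank : (1 : Cardinal) < Module.rank ℝ E := by
    have h1 : Module.finrank ℝ E = 2 * n := by
      have h2 : Module.finrank ℝ ℂ * Module.finrank ℂ E = Module.finrank ℝ E :=
        Module.finrank_mul_finrank ℝ ℂ E
      rw [Complex.finrank_real_complex, show Module.finrank ℂ E = n from
        finrank_euclideanSpace_fin] at h2
      omega
    rw [← Module.finrank_eq_rank]
    rw [h1]
    exact_mod_cast (by omega : 1 < 2 * n)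
  set f : E → ℂ := fun u => star (WithLp.equiv 2 (Fin n → ℂ) u) ⬝ᵥ
    A.mulVec (WithLp.equiv 2 (Fin n → ℂ) u) with hf
  have hfc : Continuous f := (stmt7_quadform_continuous A).comp (PiLp.continuous_ofLp 2 _)
  have hS : IsConnected (Metric.sphere (0:E) 1) := isConnected_sphere hrank 0 zero_le_one
  have himg : IsPreconnected (f '' Metric.sphere (0:E) 1) :=
    (hS.image f hfc.continuousOn).isPreconnected
  set ε := dist l1 l2 / 2 with hε
  have hεpos : 0 < ε := by
    have := dist_pos.mpr hll
    positivity
  have hdisj : Disjoint (Metric.ball l1 ε) (Metric.ball l2 ε) :=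
    Metric.ball_disjoint_ball (by rw [hε]; linarith)
  have hmemS : ∀ u : E, u ∈ Metric.sphere (0:E) 1 ↔
      star (WithLp.equiv 2 (Fin n → ℂ) u) ⬝ᵥ (WithLp.equiv 2 (Fin n → ℂ) u) = 1 := by
    intro u
    rw [stmt7_unit_iff_norm, Metric.mem_sphere, dist_zero_right]
  have hsub : f '' Metric.sphere (0:E) 1 ⊆ Metric.ball l1 ε ∪ Metric.ball l2 ε := by
    rintro - ⟨u, hu, rfl⟩
    rcases h _ ((hmemS u).mp hu) with h' | h'
    · left; rw [hf]; simp only; rw [h']; exact Metric.mem_ball_self hεpos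
    · right; rw [hf]; simp only; rw [h']; exact Metric.mem_ball_self hεpos
  have key : ∀ x : Fin n → ℂ, star x ⬝ᵥ x = 1 →
      (f ((WithLp.equiv 2 (Fin n → ℂ)).symm x) = star x ⬝ᵥ A.mulVec x ∧
       (WithLp.equiv 2 (Fin n → ℂ)).symm x ∈ Metric.sphere (0:E) 1) := by
    intro x hx
    constructor
    · rw [hf]; simp only [Equiv.apply_symm_apply]
    · rw [hmemS, Equiv.apply_symm_apply]; exact hx
  have hne : l2 ∉ Metric.ball l1 ε ∧ l1 ∉ Metric.ball l2 ε := by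
    constructor <;> · rw [Metric.mem_ball]; intro hc
                      rw [hε] at hc
                      rw [dist_comm] at hc <;> linarith [dist_comm l2 l1 ▸ hc]
  rcases himg.subset_or_subset Metric.isOpen_ball Metric.isOpen_ball hdisj hsub with hc | hc
  · left; intro x hx
    obtain ⟨he, hs⟩ := key x hx
    have := hc ⟨_, hs, he⟩
    rcases h x hx with h' | h'
    · exact h'
    · rw [h'] at this; exact absurd this hne.1
  · right; intro x hx
    obtain ⟨he, hs⟩ := key x hx
    have := hc ⟨_, hs, he⟩
    rcases h x hx with h' | h'
    · rw [h'] at this; exact absurd this hne.2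
    · exact h'

lemma stmt7_const_on_sphere {n : ℕ} (A : Matrix (Fin n) (Fin n) ℂ) (μ : ℂ)
    (h : ∀ x : Fin n → ℂ, star x ⬝ᵥ x = 1 → star x ⬝ᵥ A.mulVec x = μ) :
    A = μ • (1 : Matrix (Fin n) (Fin n) ℂ) := by
  apply stmt7_eq_smul_one_of_quadform
  intro x
  by_cases hx : x = 0
  · subst hx; simp
  · obtain ⟨c, hc, hcu⟩ := stmt7_exists_norml hx
    have h1 := h _ hcu
    have e1 : star (c • x) ⬝ᵥ A.mulVec (c • x)
        = (starRingEnd ℂ) c * c * (star x ⬝ᵥ A.mulVec x) := by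
      simp [star_smul, smul_dotProduct, Matrix.mulVec_smul, dotProduct_smul, smul_eq_mul]
      ring
    have e2 : star (c • x) ⬝ᵥ (c • x) = (starRingEnd ℂ) c * c * (star x ⬝ᵥ x) := by
      simp [star_smul, smul_dotProduct, dotProduct_smul, smul_eq_mul]
      ring
    rw [e1] at h1
    rw [e2] at hcu
    have hk : (starRingEnd ℂ) c * c ≠ 0 := mul_ne_zero (by simpa using hc) hc
    apply mul_left_cancel₀ hk
    linear_combination h1 - μ * hcu

lemma stmt7_alt_zero {V M N : Type*} [Add V] [AddZeroClass M] [AddZeroClass N]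
    (f : V → M) (g : V → N)
    (hf : ∀ x y, f (x + y) = f x + f y) (hg : ∀ x y, g (x + y) = g x + g y)
    (h : ∀ x, f x = 0 ∨ g x = 0) : (∀ x, f x = 0) ∨ (∀ x, g x = 0) := by
  by_contra hc
  push_neg at hc
  obtain ⟨a, ha⟩ := hc.1
  obtain ⟨b, hb⟩ := hc.2
  have hga : g a = 0 := (h a).resolve_left ha
  have hfb : f b = 0 := (h b).resolve_right hb
  rcases h (a + b) with hx | hx
  · rw [hf, hfb, add_zero] at hx; exact ha hx
  · rw [hg, hga, zero_add] at hx; exact hb hx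

lemma stmt7_pair_prod (l1 l2 u v w z p : ℂ) (hu : u = l1 ∨ u = l2) (hv : v = l1 ∨ v = l2)
    (hw : w = l1 ∨ w = l2) (hz : z = l1 ∨ z = l2)
    (hsum : w + z = u + v) (hprod : w * z = u * v - p) : p = 0 := by
  rcases hu with rfl | rfl <;> rcases hv with rfl | rfl <;>
    rcases hw with rfl | rfl <;> rcases hz with rfl | rfl <;>
    first
      | linear_combination hprod
      | linear_combination hprod - ((u + u) / 2) * hsum
      | linear_combination hprod - ((u + v) / 2) * hsum
      | linear_combination hprod - ((u + w) / 2) * hsum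
      | linear_combination hprod - ((u + z) / 2) * hsum
      | linear_combination hprod - ((v + v) / 2) * hsum
      | linear_combination hprod - ((v + w) / 2) * hsum
      | linear_combination hprod - ((v + z) / 2) * hsum
      | linear_combination hprod - ((w + w) / 2) * hsum
      | linear_combination hprod - ((w + z) / 2) * hsum
      | linear_combination hprod - ((z + z) / 2) * hsum

/-- If the quadratic numerical range of a block matrix with block sizes ≥ 2 is the
two-point set {λ₁, λ₂}, then (up to swapping λ₁, λ₂) the diagonal blocks are the
corresponding scalar matrices and one of the off-diagonal blocks is zero. -/
theorem stmt7 {n1 n2 : ℕ} (hn1 : 2 ≤ n1) (hn2 : 2 ≤ n2) (lam1 lam2 : ℂ)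
    (A11 : Matrix (Fin n1) (Fin n1) ℂ) (A12 : Matrix (Fin n1) (Fin n2) ℂ)
    (A21 : Matrix (Fin n2) (Fin n1) ℂ) (A22 : Matrix (Fin n2) (Fin n2) ℂ)
    (hW2 : quadRange A11 A12 A21 A22 = {lam1, lam2}) :
    ((A11 = lam1 • (1 : Matrix (Fin n1) (Fin n1) ℂ) ∧
      A22 = lam2 • (1 : Matrix (Fin n2) (Fin n2) ℂ)) ∨
     (A11 = lam2 • (1 : Matrix (Fin n1) (Fin n1) ℂ) ∧
      A22 = lam1 • (1 : Matrix (Fin n2) (Fin n2) ℂ))) ∧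
    (A12 = 0 ∨ A21 = 0) := by
  -- membership criterion
  have hforward : ∀ (x1 : Fin n1 → ℂ) (x2 : Fin n2 → ℂ),
      star x1 ⬝ᵥ x1 = 1 → star x2 ⬝ᵥ x2 = 1 → ∀ z : ℂ,
      (z - star x1 ⬝ᵥ A11.mulVec x1) * (z - star x2 ⬝ᵥ A22.mulVec x2)
        - (star x1 ⬝ᵥ A12.mulVec x2) * (star x2 ⬝ᵥ A21.mulVec x1) = 0 →
      z = lam1 ∨ z = lam2 := by
    intro x1 x2 h1 h2 z hz
    have hmem : z ∈ quadRange A11 A12 A21 A22 :=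
      ⟨x1, x2, h1, h2, (stmt7_spec_fin_two _ _ _ _ z).mpr hz⟩
    rw [hW2] at hmem
    simpa using hmem
  -- values of diagonal quadratic forms lie in {lam1, lam2}
  have hd1 : ∀ x1 : Fin n1 → ℂ, star x1 ⬝ᵥ x1 = 1 →
      star x1 ⬝ᵥ A11.mulVec x1 = lam1 ∨ star x1 ⬝ᵥ A11.mulVec x1 = lam2 := by
    intro x1 h1
    obtain ⟨u, hu1, hu0⟩ := stmt7_exists_unit_orth hn2 (A21.mulVec x1)
    exact hforward x1 u h1 hu1 _ (by rw [hu0]; ring)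
  have hd2 : ∀ x2 : Fin n2 → ℂ, star x2 ⬝ᵥ x2 = 1 →
      star x2 ⬝ᵥ A22.mulVec x2 = lam1 ∨ star x2 ⬝ᵥ A22.mulVec x2 = lam2 := by
    intro x2 h2
    obtain ⟨u, hu1, hu0⟩ := stmt7_exists_unit_orth hn1 (A12.mulVec x2)
    exact hforward u x2 hu1 h2 _ (by rw [hu0]; ring)
  -- constancy on the sphere
  obtain ⟨μ1, hμ1, hcon1⟩ : ∃ μ, (μ = lam1 ∨ μ = lam2) ∧
      ∀ x1 : Fin n1 → ℂ, star x1 ⬝ᵥ x1 = 1 → star x1 ⬝ᵥ A11.mulVec x1 = μ := by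
    rcases stmt7_quadform_const (by omega) A11 lam1 lam2 hd1 with h | h
    exacts [⟨lam1, Or.inl rfl, h⟩, ⟨lam2, Or.inr rfl, h⟩]
  obtain ⟨μ2, hμ2, hcon2⟩ : ∃ μ, (μ = lam1 ∨ μ = lam2) ∧
      ∀ x2 : Fin n2 → ℂ, star x2 ⬝ᵥ x2 = 1 → star x2 ⬝ᵥ A22.mulVec x2 = μ := by
    rcases stmt7_quadform_const (by omega) A22 lam1 lam2 hd2 with h | h
    exacts [⟨lam1, Or.inl rfl, h⟩, ⟨lam2, Or.inr rfl, h⟩]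
  have hA11 : A11 = μ1 • 1 := stmt7_const_on_sphere A11 μ1 hcon1
  have hA22 : A22 = μ2 • 1 := stmt7_const_on_sphere A22 μ2 hcon2
  -- product of off-diagonal forms vanishes on unit pairs
  have hbc : ∀ (x1 : Fin n1 → ℂ) (x2 : Fin n2 → ℂ),
      star x1 ⬝ᵥ x1 = 1 → star x2 ⬝ᵥ x2 = 1 →
      (star x1 ⬝ᵥ A12.mulVec x2) * (star x2 ⬝ᵥ A21.mulVec x1) = 0 := by
    intro x1 x2 h1 h2
    set b := star x1 ⬝ᵥ A12.mulVec x2 with hb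
    set c := star x2 ⬝ᵥ A21.mulVec x1 with hc
    obtain ⟨r, hr⟩ := IsAlgClosed.exists_pow_nat_eq ((μ1 - μ2)^2 + 4 * (b * c)) zero_lt_two
    have ht1 : (μ1 + μ2 + r) / 2 = lam1 ∨ (μ1 + μ2 + r) / 2 = lam2 := by
      apply hforward x1 x2 h1 h2
      rw [hcon1 x1 h1, hcon2 x2 h2, ← hb, ← hc]
      linear_combination hr / 4
    have ht2 : (μ1 + μ2 - r) / 2 = lam1 ∨ (μ1 + μ2 - r) / 2 = lam2 := by
      apply hforward x1 x2 h1 h2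
      rw [hcon1 x1 h1, hcon2 x2 h2, ← hb, ← hc]
      linear_combination hr / 4
    exact stmt7_pair_prod lam1 lam2 μ1 μ2 _ _ (b * c) hμ1 hμ2 ht1 ht2
      (by ring) (by linear_combination -hr / 4)
  -- extend to all vectors by homogeneity
  have hbcall : ∀ (x1 : Fin n1 → ℂ) (x2 : Fin n2 → ℂ),
      (star x1 ⬝ᵥ A12.mulVec x2) * (star x2 ⬝ᵥ A21.mulVec x1) = 0 := by
    intro x1 x2
    by_cases h1 : x1 = 0
    · subst h1; simp
    by_cases h2 : x2 = 0
    · subst h2; simp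
    obtain ⟨c1, hc1', hcu1⟩ := stmt7_exists_norml h1
    obtain ⟨c2, hc2', hcu2⟩ := stmt7_exists_norml h2
    have hz := hbc _ _ hcu1 hcu2
    have e : (star (c1 • x1) ⬝ᵥ A12.mulVec (c2 • x2)) * (star (c2 • x2) ⬝ᵥ A21.mulVec (c1 • x1))
        = (((starRingEnd ℂ) c1 * c1) * ((starRingEnd ℂ) c2 * c2)) *
          ((star x1 ⬝ᵥ A12.mulVec x2) * (star x2 ⬝ᵥ A21.mulVec x1)) := by
      simp [star_smul, smul_dotProduct, Matrix.mulVec_smul, dotProduct_smul, smul_eq_mul]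
      ring
    rw [e] at hz
    rcases mul_eq_zero.mp hz with h | h
    · exact absurd h (mul_ne_zero (mul_ne_zero (by simpa using hc1') hc1')
        (mul_ne_zero (by simpa using hc2') hc2'))
    · exact h
  -- one of the off-diagonal blocks vanishes
  have hoff : A12 = 0 ∨ A21 = 0 := by
    have hinner : ∀ x1 : Fin n1 → ℂ,
        (∀ x2, star x1 ⬝ᵥ A12.mulVec x2 = 0) ∨ (∀ x2, star x2 ⬝ᵥ A21.mulVec x1 = 0) := by
      intro x1
      apply stmt7_alt_zero (fun x2 => star x1 ⬝ᵥ A12.mulVec x2)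
        (fun x2 => star x2 ⬝ᵥ A21.mulVec x1)
      · intro x y; simp [Matrix.mulVec_add, dotProduct_add]
      · intro x y; simp [star_add, add_dotProduct]
      · intro x2; exact mul_eq_zero.mp (hbcall x1 x2)
    have houter := stmt7_alt_zero
      (fun x1 : Fin n1 → ℂ => (fun x2 : Fin n2 → ℂ => star x1 ⬝ᵥ A12.mulVec x2))
      (fun x1 : Fin n1 → ℂ => (fun x2 : Fin n2 → ℂ => star x2 ⬝ᵥ A21.mulVec x1))
      (by intro x y; funext x2; simp [star_add, add_dotProduct])
      (by intro x y; funext x2; simp [Matrix.mulVec_add, dotProduct_add])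
      (by intro x1
          rcases hinner x1 with h | h
          · left; funext x2; exact h x2
          · right; funext x2; exact h x2)
    rcases houter with h | h
    · left
      ext i j
      have := congrFun (h (Pi.single i 1)) (Pi.single j 1)
      simp only [Matrix.mulVec_single] at this
      simpa [dotProduct, Pi.single_apply, apply_ite (starRingEnd ℂ)] using this
    · right
      ext i j
      have := congrFun (h (Pi.single j 1)) (Pi.single i 1)
      simp only [Matrix.mulVec_single] at this
      simpa [dotProduct, Pi.single_apply, apply_ite (starRingEnd ℂ)] using this
  refine ⟨?_, hoff⟩
  -- both lam1 and lam2 are attained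
  have hlam : ∀ lam : ℂ, lam ∈ ({lam1, lam2} : Set ℂ) → lam = μ1 ∨ lam = μ2 := by
    intro lam hl
    have hmem : lam ∈ quadRange A11 A12 A21 A22 := by rw [hW2]; exact hl
    obtain ⟨x1, x2, h1, h2, hspec⟩ := hmem
    have heq := (stmt7_spec_fin_two _ _ _ _ lam).mp hspec
    rw [hcon1 x1 h1, hcon2 x2 h2] at heq
    have hz := hbc x1 x2 h1 h2
    have hfact : (lam - μ1) * (lam - μ2) = 0 := by linear_combination heq + hz
    rcases mul_eq_zero.mp hfact with h | h
    · left; exact sub_eq_zero.mp h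
    · right; exact sub_eq_zero.mp h
  have hl1 := hlam lam1 (by simp)
  have hl2 := hlam lam2 (by simp)
  rcases hμ1 with h1' | h1' <;> rcases hμ2 with h2' | h2'
  · -- μ1 = lam1, μ2 = lam1
    have hll : lam2 = lam1 := by
      rcases hl2 with h | h
      · exact h.trans h1'
      · exact h.trans h2'
    left
    exact ⟨by rw [hA11, h1'], by rw [hA22, h2', hll]⟩
  · -- μ1 = lam1, μ2 = lam2
    left
    exact ⟨by rw [hA11, h1'], by rw [hA22, h2']⟩
  · -- μ1 = lam2, μ2 = lam1
    right
    exact ⟨by rw [hA11, h1'], by rw [hA22, h2']⟩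
  · -- μ1 = lam2, μ2 = lam2
    have hll : lam1 = lam2 := by
      rcases hl1 with h | h
      · exact h.trans h1'
      · exact h.trans h2'
    left
    exact ⟨by rw [hA11, h1', hll], by rw [hA22, h2', ← hll]⟩
end
end

section
/- Let A = [[λ1 I, A12],[0, λ2 I]] with λ1, λ2 ≠ 0, and b = (b1, b2) with b1, b2 ≠ 0. Then the unique solution of Ax = b is x* = ((1/λ1)(b1 − (1/λ2)A12 b2), (1/λ2) b2), and the first QFOM iterate x⁽¹⁾ = diag(b1/‖b1‖, b2/‖b2‖)·H⁻¹·(‖b1‖, ‖b2‖)ᵀ, where H = [[λ1, b1*A12b2/(‖b1‖‖b2‖)],[0, λ2]], equals x* if and only if A12 b2 is zero or a scalar multiple of b1. -/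
open Matrix

noncomputable section

lemma aux_dot {n : ℕ} (v : Fin n → ℂ) (h : v ≠ 0) :
    ∃ s : ℝ, 0 < s ∧ star v ⬝ᵥ v = (s : ℂ) := by
  refine ⟨∑ i, Complex.normSq (v i), ?_, ?_⟩
  · have : ∃ i, v i ≠ 0 := by
      by_contra hc
      push_neg at hc
      exact h (funext hc)
    obtain ⟨i, hi⟩ := this
    exact Finset.sum_pos' (fun j _ => Complex.normSq_nonneg _)
      ⟨i, Finset.mem_univ i, Complex.normSq_pos.mpr hi⟩
  · simp [dotProduct, Complex.normSq_eq_conj_mul_self, Pi.star_apply]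

lemma sum_elim_eq_iff {α : Type*} {n m : Type*} (f f' : n → α) (g g' : m → α) :
    Sum.elim f g = Sum.elim f' g' ↔ f = f' ∧ g = g' := by
  constructor
  · intro h
    exact ⟨funext fun i => congrFun h (Sum.inl i), funext fun j => congrFun h (Sum.inr j)⟩
  · rintro ⟨rfl, rfl⟩; rfl

/-- QFOM first-iterate characterization for `A = [[λ₁ I, A₁₂],[0, λ₂ I]]`. -/
theorem stmt8 {n1 n2 : ℕ} (A12 : Matrix (Fin n1) (Fin n2) ℂ) (lam1 lam2 : ℂ)
    (hlam1 : lam1 ≠ 0) (hlam2 : lam2 ≠ 0)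
    (b1 : Fin n1 → ℂ) (b2 : Fin n2 → ℂ) (hb1 : b1 ≠ 0) (hb2 : b2 ≠ 0) :
    let A : Matrix (Fin n1 ⊕ Fin n2) (Fin n1 ⊕ Fin n2) ℂ :=
      Matrix.fromBlocks (lam1 • (1 : Matrix (Fin n1) (Fin n1) ℂ)) A12 0
        (lam2 • (1 : Matrix (Fin n2) (Fin n2) ℂ))
    let b : Fin n1 ⊕ Fin n2 → ℂ := Sum.elim b1 b2
    let xstar : Fin n1 ⊕ Fin n2 → ℂ :=
      Sum.elim (lam1⁻¹ • (b1 - lam2⁻¹ • (A12 *ᵥ b2))) (lam2⁻¹ • b2)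
    let nb1 : ℂ := (Real.sqrt (star b1 ⬝ᵥ b1).re : ℝ)
    let nb2 : ℂ := (Real.sqrt (star b2 ⬝ᵥ b2).re : ℝ)
    let H : Matrix (Fin 2) (Fin 2) ℂ :=
      !![lam1, (star b1 ⬝ᵥ (A12 *ᵥ b2)) / (nb1 * nb2); 0, lam2]
    let ξ : Fin 2 → ℂ := H⁻¹ *ᵥ ![nb1, nb2]
    let x1 : Fin n1 ⊕ Fin n2 → ℂ :=
      Sum.elim ((ξ 0 / nb1) • b1) ((ξ 1 / nb2) • b2)
    (A *ᵥ xstar = b ∧ ∀ x : Fin n1 ⊕ Fin n2 → ℂ, A *ᵥ x = b → x = xstar) ∧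
    (x1 = xstar ↔ (A12 *ᵥ b2 = 0 ∨ ∃ c : ℂ, A12 *ᵥ b2 = c • b1)) := by
  intro A b xstar nb1 nb2 H ξ x1
  obtain ⟨s1, hs1, hd1⟩ := aux_dot b1 hb1
  obtain ⟨s2, hs2, hd2⟩ := aux_dot b2 hb2
  have hre1 : (star b1 ⬝ᵥ b1).re = s1 := by rw [hd1]; simp
  have hre2 : (star b2 ⬝ᵥ b2).re = s2 := by rw [hd2]; simp
  have hnb1 : nb1 = ((Real.sqrt s1 : ℝ) : ℂ) := by simp [nb1, hre1]
  have hnb2 : nb2 = ((Real.sqrt s2 : ℝ) : ℂ) := by simp [nb2, hre2]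
  have hnb1ne : nb1 ≠ 0 := by
    rw [hnb1]
    exact_mod_cast (Real.sqrt_pos.mpr hs1).ne'
  have hnb2ne : nb2 ≠ 0 := by
    rw [hnb2]
    exact_mod_cast (Real.sqrt_pos.mpr hs2).ne'
  have hnb1sq : nb1 * nb1 = star b1 ⬝ᵥ b1 := by
    rw [hnb1, hd1]
    rw [← Complex.ofReal_mul, Real.mul_self_sqrt hs1.le]
  -- solve part 1
  have hsolve : ∀ u : Fin n1 → ℂ, ∀ w : Fin n2 → ℂ,
      A *ᵥ Sum.elim u w = Sum.elim (lam1 • u + A12 *ᵥ w) (lam2 • w) := by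
    intro u w
    rw [show A = Matrix.fromBlocks (lam1 • (1 : Matrix (Fin n1) (Fin n1) ℂ)) A12 0
        (lam2 • (1 : Matrix (Fin n2) (Fin n2) ℂ)) from rfl, Matrix.fromBlocks_mulVec]
    simp [Matrix.smul_mulVec]
  have hAx : A *ᵥ xstar = b := by
    rw [show xstar = Sum.elim (lam1⁻¹ • (b1 - lam2⁻¹ • (A12 *ᵥ b2))) (lam2⁻¹ • b2) from rfl,
      hsolve]
    have h1 : lam1 • (lam1⁻¹ • (b1 - lam2⁻¹ • (A12 *ᵥ b2))) + A12 *ᵥ (lam2⁻¹ • b2) = b1 := by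
      rw [Matrix.mulVec_smul, smul_smul, mul_inv_cancel₀ hlam1, one_smul]
      abel
    have h2 : lam2 • (lam2⁻¹ • b2) = b2 := by
      rw [smul_smul, mul_inv_cancel₀ hlam2, one_smul]
    rw [h1, h2]
  refine ⟨⟨hAx, ?_⟩, ?_⟩
  · -- uniqueness
    intro x hx
    have hxe : x = Sum.elim (fun i => x (Sum.inl i)) (fun j => x (Sum.inr j)) := by
      funext i; cases i <;> rfl
    rw [hxe, hsolve] at hx
    rw [show b = Sum.elim b1 b2 from rfl, sum_elim_eq_iff] at hx
    obtain ⟨h1, h2⟩ := hx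
    have hw : (fun j => x (Sum.inr j)) = lam2⁻¹ • b2 := by
      rw [← h2, smul_smul, inv_mul_cancel₀ hlam2, one_smul]
    have hu : (fun i => x (Sum.inl i)) = lam1⁻¹ • (b1 - lam2⁻¹ • (A12 *ᵥ b2)) := by
      have h1' : lam1 • (fun i => x (Sum.inl i)) = b1 - lam2⁻¹ • (A12 *ᵥ b2) := by
        rw [eq_sub_iff_add_eq, ← Matrix.mulVec_smul, ← hw, h1]
      rw [← h1', smul_smul, inv_mul_cancel₀ hlam1, one_smul]
    rw [hxe, hu, hw]
  · -- part 2
    set h : ℂ := (star b1 ⬝ᵥ (A12 *ᵥ b2)) / (nb1 * nb2) with hh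
    have hHdet : IsUnit H.det := by
      have : H.det = lam1 * lam2 := by
        simp [H, Matrix.det_fin_two_of]
      rw [this]
      exact (mul_ne_zero hlam1 hlam2).isUnit
    have hxi : ξ = ![(lam2 * nb1 - h * nb2) / (lam1 * lam2), nb2 / lam2] := by
      have hmv : H *ᵥ ![(lam2 * nb1 - h * nb2) / (lam1 * lam2), nb2 / lam2] = ![nb1, nb2] := by
        have hHe : H = !![lam1, h; 0, lam2] := by rw [hh]
        rw [hHe]
        funext i
        fin_cases i <;>
          simp [Matrix.mulVec, dotProduct, Fin.sum_univ_two] <;>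
          field_simp <;> ring
      calc ξ = H⁻¹ *ᵥ (H *ᵥ ![(lam2 * nb1 - h * nb2) / (lam1 * lam2), nb2 / lam2]) := by
              rw [hmv]
        _ = (H⁻¹ * H) *ᵥ _ := by rw [Matrix.mulVec_mulVec]
        _ = _ := by rw [Matrix.nonsing_inv_mul H hHdet, Matrix.one_mulVec]
    have hxi0 : ξ 0 = (lam2 * nb1 - h * nb2) / (lam1 * lam2) := by rw [hxi]; rfl
    have hxi1 : ξ 1 = nb2 / lam2 := by rw [hxi]; rfl
    -- second components coincide
    have hsnd : (ξ 1 / nb2) • b2 = lam2⁻¹ • b2 := by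
      have : ξ 1 / nb2 = lam2⁻¹ := by
        rw [hxi1]
        field_simp
      rw [this]
    have hx1e : x1 = Sum.elim ((ξ 0 / nb1) • b1) (lam2⁻¹ • b2) := by
      rw [show x1 = Sum.elim ((ξ 0 / nb1) • b1) ((ξ 1 / nb2) • b2) from rfl, hsnd]
    rw [hx1e, show xstar = Sum.elim (lam1⁻¹ • (b1 - lam2⁻¹ • (A12 *ᵥ b2))) (lam2⁻¹ • b2)
      from rfl, sum_elim_eq_iff]
    constructor
    · rintro ⟨h1, -⟩
      right
      have e1 : b1 - lam2⁻¹ • (A12 *ᵥ b2) = (lam1 * (ξ 0 / nb1)) • b1 := by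
        calc b1 - lam2⁻¹ • (A12 *ᵥ b2)
            = lam1 • (lam1⁻¹ • (b1 - lam2⁻¹ • (A12 *ᵥ b2))) := by
              rw [smul_smul, mul_inv_cancel₀ hlam1, one_smul]
          _ = lam1 • ((ξ 0 / nb1) • b1) := by rw [h1]
          _ = (lam1 * (ξ 0 / nb1)) • b1 := smul_smul _ _ _
      have e2 : lam2⁻¹ • (A12 *ᵥ b2) = (1 - lam1 * (ξ 0 / nb1)) • b1 := by
        rw [sub_smul, one_smul, ← e1]
        abel
      refine ⟨lam2 * (1 - lam1 * (ξ 0 / nb1)), ?_⟩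
      calc A12 *ᵥ b2 = lam2 • (lam2⁻¹ • (A12 *ᵥ b2)) := by
            rw [smul_smul, mul_inv_cancel₀ hlam2, one_smul]
        _ = lam2 • ((1 - lam1 * (ξ 0 / nb1)) • b1) := by rw [e2]
        _ = (lam2 * (1 - lam1 * (ξ 0 / nb1))) • b1 := smul_smul _ _ _
    · intro hcase
      obtain ⟨c, hc⟩ : ∃ c : ℂ, A12 *ᵥ b2 = c • b1 := by
        rcases hcase with h0 | hc
        · exact ⟨0, by simp [h0]⟩
        · exact hc
      have hhval : h = c * nb1 / nb2 := by
        rw [hh, hc, dotProduct_smul, smul_eq_mul, ← hnb1sq]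
        field_simp
      refine ⟨?_, rfl⟩
      have hcoef : ξ 0 / nb1 = lam1⁻¹ * (1 - lam2⁻¹ * c) := by
        rw [hxi0, hhval]
        field_simp
      have hrhs : b1 - lam2⁻¹ • (c • b1) = (1 - lam2⁻¹ * c) • b1 := by
        rw [sub_smul, one_smul, smul_smul]
      rw [hc, hcoef, hrhs, smul_smul]
end
end

section
/- Let Q = [[A, B],[B*, −A]] be a Hermitian block matrix where A is Hermitian with smallest eigenvalue α_min > 0 and B is arbitrary. Then every λ ∈ W²(Q) satisfies |Re(λ)| ≥ α_min; i.e., the quadratic numerical range of Q has a gap of half-width α_min around the imaginary axis. -/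
open Matrix

noncomputable section

open scoped ComplexOrder in
/-- Rayleigh-quotient lower bound: for a Hermitian matrix whose eigenvalues are all
at least `αmin`, the quadratic form at a unit vector is a real number `≥ αmin`. -/
lemma rayleigh_aux {n : ℕ} (A : Matrix (Fin n) (Fin n) ℂ) (hA : A.IsHermitian) (αmin : ℝ)
    (hmin : ∀ i, αmin ≤ hA.eigenvalues i) (x : Fin n → ℂ) (hx : star x ⬝ᵥ x = 1) :
    ∃ α : ℝ, αmin ≤ α ∧ star x ⬝ᵥ A.mulVec x = (α : ℂ) := by
  classical
  set z := star x ⬝ᵥ A.mulVec x with hz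
  have h3 : star (A.mulVec x) ⬝ᵥ x = star z := by rw [hz, star_dotProduct]
  have hreal : (starRingEnd ℂ) z = z := by
    rw [show (starRingEnd ℂ) z = star z from rfl, ← h3, star_mulVec, hA.eq,
      ← dotProduct_mulVec, hz]
  have hzre : z = (z.re : ℂ) := (Complex.conj_eq_iff_re.mp hreal).symm
  refine ⟨z.re, ?_, hzre⟩
  set U : Matrix (Fin n) (Fin n) ℂ := (hA.eigenvectorUnitary : Matrix (Fin n) (Fin n) ℂ) with hU
  have hM : (A - (αmin : ℂ) • 1).PosSemidef := by
    have h1 : U * star U = 1 := (Matrix.mem_unitaryGroup_iff).mp hA.eigenvectorUnitary.2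
    have key : A - (αmin : ℂ) • 1 =
        U * diagonal (fun i => ((hA.eigenvalues i - αmin : ℝ) : ℂ)) * star U := by
      have hd : diagonal (fun i => ((hA.eigenvalues i - αmin : ℝ) : ℂ)) =
          diagonal ((RCLike.ofReal : ℝ → ℂ) ∘ hA.eigenvalues) - (αmin : ℂ) • 1 := by
        ext i j
        by_cases h : i = j <;>
          simp [Matrix.diagonal_apply, h, Matrix.one_apply, Matrix.sub_apply, Matrix.smul_apply]
      rw [hd, Matrix.mul_sub, Matrix.sub_mul,
        ← (show A = U * diagonal ((RCLike.ofReal : ℝ → ℂ) ∘ hA.eigenvalues) * star U from hA.spectral_theorem)]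
      congr 1
      rw [Matrix.mul_smul, Matrix.mul_one, Matrix.smul_mul, h1]
    rw [key, show star U = Uᴴ from rfl]
    refine (posSemidef_diagonal_iff.mpr fun i => ?_).mul_mul_conjTranspose_same _
    have h0 : (0:ℝ) ≤ hA.eigenvalues i - αmin := by linarith [hmin i]
    exact_mod_cast Complex.zero_le_real.mpr h0
  have h2 := hM.re_dotProduct_nonneg x
  have hsub : star x ⬝ᵥ (A - (αmin : ℂ) • 1).mulVec x = z - (αmin : ℂ) := by
    rw [Matrix.sub_mulVec, dotProduct_sub, hz]
    congr 1
    rw [Matrix.smul_mulVec, Matrix.one_mulVec, dotProduct_smul, hx, smul_eq_mul, mul_one]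
  rw [hsub] at h2
  simp only [Complex.sub_re, Complex.ofReal_re, RCLike.re_to_complex] at h2
  linarith

/-- A point in the spectrum of a 2×2 complex matrix is a root of its characteristic
polynomial. -/
lemma det_char {a b c d lam : ℂ} (h : lam ∈ spectrum ℂ !![a, b; c, d]) :
    (lam - a) * (lam - d) - b * c = 0 := by
  rw [spectrum.mem_iff] at h
  rw [Matrix.isUnit_iff_isUnit_det, isUnit_iff_ne_zero, not_not] at h
  simp [Matrix.det_fin_two, Matrix.algebraMap_matrix_apply] at h
  linear_combination h

/-- For the Hermitian block matrix `Q = [[A, B],[B*, −A]]` with `A` Hermitian with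
smallest eigenvalue `αmin > 0`, every `λ ∈ W²(Q)` satisfies `|Re λ| ≥ αmin`. -/
theorem stmt14 {n : ℕ} (A B : Matrix (Fin n) (Fin n) ℂ) (hA : A.IsHermitian)
    (αmin : ℝ) (hpos : 0 < αmin)
    (hmin : IsLeast (Set.range hA.eigenvalues) αmin) :
    ∀ lam ∈ quadRange A B Bᴴ (-A), αmin ≤ |lam.re| := by
  intro lam hlam
  obtain ⟨x1, x2, hx1, hx2, hspec⟩ := hlam
  have hmin' : ∀ i, αmin ≤ hA.eigenvalues i := fun i => hmin.2 ⟨i, rfl⟩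
  obtain ⟨α1, hα1, he1⟩ := rayleigh_aux A hA αmin hmin' x1 hx1
  obtain ⟨α2, hα2, he2⟩ := rayleigh_aux A hA αmin hmin' x2 hx2
  set b := star x1 ⬝ᵥ B.mulVec x2 with hb
  have hc : star x2 ⬝ᵥ Bᴴ.mulVec x1 = star b := by
    rw [star_dotProduct, star_mulVec, conjTranspose_conjTranspose, ← dotProduct_mulVec, ← hb]
  have hd : star x2 ⬝ᵥ (-A).mulVec x2 = -(α2 : ℂ) := by
    rw [Matrix.neg_mulVec, dotProduct_neg, he2]
  rw [he1, hc, hd] at hspec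
  have heq := det_char hspec
  have heq' : (lam - (α1 : ℂ)) * (lam + (α2 : ℂ)) = (Complex.normSq b : ℂ) := by
    rw [← Complex.mul_conj, ← Complex.star_def]
    linear_combination heq
  have hre := congrArg Complex.re heq'
  simp only [Complex.mul_re, Complex.sub_re, Complex.add_re, Complex.sub_im, Complex.add_im,
    Complex.ofReal_re, Complex.ofReal_im, add_zero, sub_zero] at hre
  have hn : 0 ≤ Complex.normSq b := Complex.normSq_nonneg b
  by_contra hcon
  push_neg at hcon
  rw [abs_lt] at hcon
  nlinarith [sq_nonneg lam.im, hcon.1, hcon.2]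
end
end
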